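/- Let A be a complex Banach space, γ : ℤ → ℝ with γ(n) > 0 for all n, and s > 0. Let g : AddCircle 1 → A be integrable with n ↦ ‖fourierCoeff g n‖ summable over ℤ. Then there exists a continuous function h : AddCircle 1 → A such that for all n ∈ ℤ, fourierCoeff h n = ((1 + γ(n)^2)^(−s) : ℝ) • fourierCoeff g n; moreover the family n ↦ (1 + γ(n)^2)^s ‖fourierCoeff h n‖ is summable and ∑'_{n} (1 + γ(n)^2)^s ‖fourierCoeff h n‖ = ∑'_{n} ‖fourierCoeff g n‖. (Torus instance of the theorem that (I − Δ)^s is a surjective isometry from 𝔅^{2s}_γ onto 𝔅^0_γ: h satisfies (I − Δ)^s h = g and ‖h‖_{𝔅^{2s}_γ} = ‖g‖_{𝔅^0_γ}.) -/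

import Mathlib

open MeasureTheory AddCircle

lemma norm_fourier_one (n : ℤ) (x : AddCircle (1 : ℝ)) : ‖fourier n x‖ = 1 := by
  simp [Circle.norm_coe, fourier_apply]

lemma integral_fourier_mul_fourier (m n : ℤ) :
    (∫ t : AddCircle (1 : ℝ), fourier (-m) t * fourier n t ∂haarAddCircle) =
      if m = n then 1 else 0 := by
  classical
  have horth := orthonormal_iff_ite.mp (orthonormal_fourier (T := 1)) m n
  rw [MeasureTheory.L2.inner_def] at horth
  rw [← horth]
  apply integral_congr_ae
  filter_upwards [coeFn_fourierLp (T := 1) 2 m, coeFn_fourierLp (T := 1) 2 n] with t h1 h2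
  rw [h1, h2, RCLike.inner_apply, ← fourier_neg, mul_comm]

lemma fourierCoeff_fourier_smul {A : Type} [NormedAddCommGroup A] [NormedSpace ℂ A]
    [CompleteSpace A] (n : ℤ) (a : A) (m : ℤ) :
    fourierCoeff (fun x : AddCircle (1 : ℝ) => fourier n x • a) m =
      if m = n then a else 0 := by
  classical
  rw [fourierCoeff]
  simp_rw [smul_smul]
  rw [integral_smul_const, integral_fourier_mul_fourier]
  split <;> simp

theorem inv_laplacian_surjective
    {A : Type} [NormedAddCommGroup A] [NormedSpace ℂ A] [CompleteSpace A]
    (γ : ℤ → ℝ) (hγ : ∀ n, 0 < γ n) (s : ℝ) (hs : 0 < s)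
    (g : AddCircle (1 : ℝ) → A) (hg : Integrable g haarAddCircle)
    (hsum : Summable fun n : ℤ => ‖fourierCoeff g n‖) :
    ∃ h : AddCircle (1 : ℝ) → A, Continuous h ∧
      (∀ n : ℤ, fourierCoeff h n = ((1 + γ n ^ 2) ^ (-s) : ℝ) • fourierCoeff g n) ∧
      (Summable fun n : ℤ => (1 + γ n ^ 2) ^ s * ‖fourierCoeff h n‖) ∧
      (∑' n : ℤ, (1 + γ n ^ 2) ^ s * ‖fourierCoeff h n‖) =
        ∑' n : ℤ, ‖fourierCoeff g n‖ := by
  classical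
  set c : ℤ → A := fun n => ((1 + γ n ^ 2) ^ (-s) : ℝ) • fourierCoeff g n with hc_def
  have hbase : ∀ n : ℤ, (1 : ℝ) ≤ 1 + γ n ^ 2 := fun n => by
    nlinarith [sq_nonneg (γ n)]
  have hbasepos : ∀ n : ℤ, (0 : ℝ) < 1 + γ n ^ 2 := fun n =>
    lt_of_lt_of_le one_pos (hbase n)
  have hnormc : ∀ n : ℤ, ‖c n‖ = (1 + γ n ^ 2) ^ (-s) * ‖fourierCoeff g n‖ := by
    intro n
    rw [hc_def, norm_smul, Real.norm_eq_abs,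
      abs_of_nonneg (Real.rpow_nonneg (hbasepos n).le _)]
  have hcle : ∀ n : ℤ, ‖c n‖ ≤ ‖fourierCoeff g n‖ := by
    intro n
    rw [hnormc n]
    calc (1 + γ n ^ 2) ^ (-s) * ‖fourierCoeff g n‖
        ≤ 1 * ‖fourierCoeff g n‖ := by
          gcongr
          exact Real.rpow_le_one_of_one_le_of_nonpos (hbase n) (neg_nonpos.mpr hs.le)
      _ = ‖fourierCoeff g n‖ := one_mul _
  have hcsum : Summable fun n : ℤ => ‖c n‖ :=
    Summable.of_nonneg_of_le (fun n => norm_nonneg _) hcle hsum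
  -- the candidate function
  set h : AddCircle (1 : ℝ) → A := fun x => ∑' n : ℤ, fourier n x • c n with hh_def
  have hFcont : ∀ n : ℤ, Continuous fun x : AddCircle (1 : ℝ) => fourier n x • c n :=
    fun n => ((fourier n).continuous).smul continuous_const
  have hFnorm : ∀ (n : ℤ) (x : AddCircle (1 : ℝ)), ‖fourier n x • c n‖ = ‖c n‖ := by
    intro n x
    rw [norm_smul, norm_fourier_one, one_mul]
  have hcont : Continuous h := by
    refine continuous_tsum hFcont hcsum ?_
    intro n x
    exact (hFnorm n x).le
  have hsummable_pt : ∀ x : AddCircle (1 : ℝ),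
      Summable fun n : ℤ => fourier n x • c n := by
    intro x
    apply Summable.of_norm
    simpa only [hFnorm] using hcsum
  -- Fourier coefficients of h
  have hcoeff : ∀ m : ℤ, fourierCoeff h m = c m := by
    intro m
    have h1 : fourierCoeff h m =
        ∫ t : AddCircle (1 : ℝ),
          (∑' n : ℤ, fourier (-m) t • (fourier n t • c n)) ∂haarAddCircle := by
      rw [fourierCoeff]
      apply integral_congr_ae
      filter_upwards with t
      rw [hh_def]
      exact (Summable.tsum_const_smul (fourier (-m) t) (hsummable_pt t)).symm
    rw [h1]
    have h2 : (∫ t : AddCircle (1 : ℝ),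
        (∑' n : ℤ, fourier (-m) t • (fourier n t • c n)) ∂haarAddCircle) =
        ∑' n : ℤ, ∫ t : AddCircle (1 : ℝ),
          fourier (-m) t • (fourier n t • c n) ∂haarAddCircle := by
      have hmeas : ∀ n : ℤ, AEStronglyMeasurable
          (fun t : AddCircle (1 : ℝ) => fourier (-m) t • (fourier n t • c n))
          haarAddCircle :=
        fun n => (((fourier (-m)).continuous).smul (hFcont n)).aestronglyMeasurable
      have hnn : ∀ (n : ℤ) (t : AddCircle (1 : ℝ)),
          ‖fourier (-m) t • (fourier n t • c n)‖₊ = ‖c n‖₊ := by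
        intro n t
        ext
        simp [norm_smul, norm_fourier_one, Circle.norm_coe]
      have hfin : (∑' n : ℤ, ∫⁻ t : AddCircle (1 : ℝ),
          ‖fourier (-m) t • (fourier n t • c n)‖₊ ∂haarAddCircle) ≠ ⊤ := by
        calc ∑' n : ℤ, ∫⁻ t : AddCircle (1 : ℝ),
              ‖fourier (-m) t • (fourier n t • c n)‖₊ ∂haarAddCircle
            = ∑' n : ℤ, (‖c n‖₊ : ENNReal) := by
              refine tsum_congr fun n => ?_
              simp_rw [hnn n]
              simp [lintegral_const]
          _ ≠ ⊤ := by
              rw [ENNReal.tsum_coe_ne_top_iff_summable]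
              exact NNReal.summable_coe.mp (by simpa using hcsum)
      exact MeasureTheory.integral_tsum hmeas hfin
    rw [h2]
    have h3 : ∀ n : ℤ, (∫ t : AddCircle (1 : ℝ),
        fourier (-m) t • (fourier n t • c n) ∂haarAddCircle) =
        if m = n then c n else 0 := by
      intro n
      have := fourierCoeff_fourier_smul (A := A) n (c n) m
      rw [fourierCoeff] at this
      exact this
    simp_rw [h3]
    rw [tsum_eq_single m]
    · simp
    · intro b hb
      simp [Ne.symm hb]
  -- norm identities
  have key : ∀ n : ℤ, (1 + γ n ^ 2) ^ s * ‖fourierCoeff h n‖ = ‖fourierCoeff g n‖ := by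
    intro n
    rw [hcoeff n, hnormc n, ← mul_assoc, ← Real.rpow_add (hbasepos n), add_neg_cancel,
      Real.rpow_zero, one_mul]
  refine ⟨h, hcont, fun n => hcoeff n, ?_, ?_⟩
  · exact hsum.congr fun n => (key n).symm
  · exact tsum_congr key
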